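/- (Von Neumann's trace inequality, real square case) For any A, B ∈ ℝ^{d×d} with singular values σ_{A,1} ≥ … ≥ σ_{A,d} and σ_{B,1} ≥ … ≥ σ_{B,d} listed in nonincreasing order, tr(A B) ≤ Σ_{i=1}^{d} σ_{A,i} σ_{B,i}. -/

import Mathlib

open scoped BigOperators
open Matrix

/-- The singular values of a real matrix `M`: the nonnegative square roots of the
eigenvalues of `MᵀM` (there are `n` of them for an `m × n` matrix, indexed by `n`). -/
noncomputable def singularValues {m n : Type*} [Fintype m] [Fintype n] [DecidableEq n]
    (M : Matrix m n ℝ) : n → ℝ :=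
  fun i => Real.sqrt ((show (Mᵀ * M).IsHermitian by
    simpa using Matrix.isHermitian_conjTranspose_mul_self M).eigenvalues i)

open Finset

lemma col_zero {d : ℕ} (M : Matrix (Fin d) (Fin d) ℝ) (i : Fin d)
    (h : (Mᵀ * M) i i = 0) : ∀ k, M k i = 0 := by
  intro k
  have hsum : ∑ j, M j i * M j i = 0 := by
    simpa [Matrix.mul_apply, Matrix.transpose_apply] using h
  exact mul_self_eq_zero.1
    ((Finset.sum_eq_zero_iff_of_nonneg (fun j _ => mul_self_nonneg (M j i))).1 hsum k
      (Finset.mem_univ k))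

lemma svd_decomp {d : ℕ} (A : Matrix (Fin d) (Fin d) ℝ) :
    ∃ U V : Matrix (Fin d) (Fin d) ℝ, ∃ f : Fin d → ℝ,
      Vᵀ * V = 1 ∧ V * Vᵀ = 1 ∧
      Uᵀ * U = Matrix.diagonal f ∧ (∀ i, f i ≤ 1) ∧
      (U * Uᵀ)ᵀ = U * Uᵀ ∧ (U * Uᵀ) * (U * Uᵀ) = U * Uᵀ ∧
      A = U * Matrix.diagonal (singularValues A) * Vᵀ := by
  classical
  have hH : (Aᵀ * A).IsHermitian := by simpa using Matrix.isHermitian_conjTranspose_mul_self A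
  set V : Matrix (Fin d) (Fin d) ℝ := (Matrix.IsHermitian.eigenvectorUnitary hH : Matrix (Fin d) (Fin d) ℝ) with hV
  set lam : Fin d → ℝ := hH.eigenvalues with hlam
  have hV1 : Vᵀ * V = 1 := by
    have := Matrix.mem_unitaryGroup_iff'.mp (Matrix.IsHermitian.eigenvectorUnitary hH).2
    exact this
  have hV2 : V * Vᵀ = 1 := by
    have := Matrix.mem_unitaryGroup_iff.mp (Matrix.IsHermitian.eigenvectorUnitary hH).2
    exact this
  have hdiag : Vᵀ * (Aᵀ * A) * V = Matrix.diagonal lam := by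
    have h := Matrix.IsHermitian.conjStarAlgAut_star_eigenvectorUnitary hH
    rw [Unitary.conjStarAlgAut_star_apply] at h
    exact h
  set σ : Fin d → ℝ := singularValues A with hσ
  have hlam0 : ∀ i, 0 ≤ lam i := fun i => Matrix.eigenvalues_conjTranspose_mul_self_nonneg A i
  have hσsq : ∀ i, σ i * σ i = lam i := fun i => Real.mul_self_sqrt (hlam0 i)
  have hσ0 : ∀ i, 0 ≤ σ i := fun i => Real.sqrt_nonneg _
  have hσlam : ∀ i, σ i = 0 → lam i = 0 := fun i h => by rw [← hσsq i, h, mul_zero]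
  set g : Fin d → ℝ := fun i => if σ i = 0 then 0 else (σ i)⁻¹ with hg
  set f : Fin d → ℝ := fun i => if σ i = 0 then 0 else 1 with hf
  set U : Matrix (Fin d) (Fin d) ℝ := A * V * Matrix.diagonal g with hU
  have hUtU : Uᵀ * U = Matrix.diagonal f := by
    have : Uᵀ * U = Matrix.diagonal g * (Vᵀ * (Aᵀ * A) * V) * Matrix.diagonal g := by
      rw [hU]
      simp only [Matrix.transpose_mul, Matrix.diagonal_transpose]
      noncomm_ring
    rw [this, hdiag, Matrix.diagonal_mul_diagonal, Matrix.diagonal_mul_diagonal]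
    apply congrArg Matrix.diagonal
    funext i
    by_cases h : σ i = 0
    · simp [hg, hf, h]
    · have hl : lam i = σ i * σ i := (hσsq i).symm
      simp only [hg, hf, if_neg h, hl]
      field_simp
  have hf1 : ∀ i, f i ≤ 1 := by intro i; simp only [hf]; split <;> norm_num
  have hgσ : ∀ i, g i * σ i = f i := by
    intro i
    by_cases h : σ i = 0
    · simp [hg, hf, h]
    · simp [hg, hf, h]
  have hAV : (A * V)ᵀ * (A * V) = Matrix.diagonal lam := by
    rw [Matrix.transpose_mul, ← hdiag]; noncomm_ring
  have hcolAV : ∀ i, σ i = 0 → ∀ k, (A * V) k i = 0 := by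
    intro i h k
    apply col_zero (A * V) i _ k
    rw [hAV, Matrix.diagonal_apply_eq, hσlam i h]
  have hAVf : A * V * Matrix.diagonal f = A * V := by
    ext k i
    rw [Matrix.mul_diagonal]
    by_cases h : σ i = 0
    · rw [hcolAV i h k]; ring
    · simp [hf, h]
  have hdecomp : A = U * Matrix.diagonal σ * Vᵀ := by
    have h1 : U * Matrix.diagonal σ = A * V := by
      rw [hU, Matrix.mul_assoc (A * V), Matrix.diagonal_mul_diagonal]
      have : (fun i => g i * σ i) = f := funext hgσ
      rw [this, hAVf]
    rw [h1, Matrix.mul_assoc, hV2, Matrix.mul_one]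
  have hUf : U * Matrix.diagonal f = U := by
    have hcolU : ∀ i, σ i = 0 → ∀ k, U k i = 0 := by
      intro i h k
      apply col_zero U i _ k
      rw [hUtU, Matrix.diagonal_apply_eq]
      simp [hf, h]
    ext k i
    rw [Matrix.mul_diagonal]
    by_cases h : σ i = 0
    · rw [hcolU i h k]; ring
    · simp [hf, h]
  refine ⟨U, V, f, hV1, hV2, hUtU, hf1, ?_, ?_, hdecomp⟩
  · rw [Matrix.transpose_mul, Matrix.transpose_transpose]
  · calc U * Uᵀ * (U * Uᵀ) = U * (Uᵀ * U) * Uᵀ := by noncomm_ring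
      _ = U * Matrix.diagonal f * Uᵀ := by rw [hUtU]
      _ = U * Uᵀ := by rw [hUf]

open Finset

lemma telescope (a : ℕ → ℝ) (i d : ℕ) (h : i ≤ d) :
    ∑ k ∈ Finset.Ico i d, (a k - a (k+1)) = a i - a d := by
  induction d with
  | zero => simp_all
  | succ n ih =>
    rcases Nat.lt_or_ge i (n+1) with h'|h'
    · rw [Finset.sum_Ico_succ_top (by omega), ih (by omega)]; ring
    · have : i = n + 1 := by omega
      simp [this]

lemma subStochastic_rearrange {d : ℕ} (α β : Fin d → ℝ)
    (hα : Antitone α) (hβ : Antitone β) (hα0 : ∀ i, 0 ≤ α i) (hβ0 : ∀ i, 0 ≤ β i)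
    (p : Fin d → Fin d → ℝ) (hp : ∀ i j, 0 ≤ p i j)
    (hrow : ∀ i, ∑ j, p i j ≤ 1) (hcol : ∀ j, ∑ i, p i j ≤ 1) :
    ∑ i, ∑ j, α i * β j * p i j ≤ ∑ i, α i * β i := by
  classical
  set a : ℕ → ℝ := fun k => if h : k < d then α ⟨k, h⟩ else 0 with ha
  set b : ℕ → ℝ := fun k => if h : k < d then β ⟨k, h⟩ else 0 with hb
  set c : ℕ → ℝ := fun k => a k - a (k+1) with hc
  set e : ℕ → ℝ := fun k => b k - b (k+1) with he
  have hamono : Antitone a := by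
    intro x y hxy
    simp only [ha]
    split_ifs with h1 h2 h2
    · exact hα (by exact_mod_cast hxy)
    · omega
    · exact hα0 _
    · exact le_rfl
  have hbmono : Antitone b := by
    intro x y hxy
    simp only [hb]
    split_ifs with h1 h2 h2
    · exact hβ (by exact_mod_cast hxy)
    · omega
    · exact hβ0 _
    · exact le_rfl
  have hc0 : ∀ k, 0 ≤ c k := fun k => sub_nonneg.2 (hamono (Nat.le_succ k))
  have he0 : ∀ k, 0 ≤ e k := fun k => sub_nonneg.2 (hbmono (Nat.le_succ k))
  -- χ indicator
  set χ : Fin d → ℕ → ℝ := fun i k => if (i:ℕ) ≤ k then 1 else 0 with hχ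
  have hχ0 : ∀ i k, 0 ≤ χ i k := by intro i k; simp only [hχ]; split <;> norm_num
  have hχ1 : ∀ i k, χ i k ≤ 1 := by intro i k; simp only [hχ]; split <;> norm_num
  have hαsum : ∀ i : Fin d, α i = ∑ k ∈ range d, c k * χ i k := by
    intro i
    have h1 : ∑ k ∈ range d, c k * χ i k = ∑ k ∈ Finset.Ico (i:ℕ) d, c k := by
      have : Finset.Ico (i:ℕ) d = (range d).filter (fun k => (i:ℕ) ≤ k) := by
        ext x; simp [Finset.mem_Ico]; omega
      rw [this, Finset.sum_filter]
      apply Finset.sum_congr rfl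
      intro k _
      simp only [hχ, mul_ite, mul_one, mul_zero]
    rw [h1, hc, telescope a (i:ℕ) d (le_of_lt i.isLt)]
    have had : a d = 0 := by simp [ha]
    have hai : a (i:ℕ) = α i := by simp [ha, i.isLt]
    rw [had, hai, sub_zero]
  have hβsum : ∀ j : Fin d, β j = ∑ l ∈ range d, e l * χ j l := by
    intro j
    have h1 : ∑ l ∈ range d, e l * χ j l = ∑ l ∈ Finset.Ico (j:ℕ) d, e l := by
      have : Finset.Ico (j:ℕ) d = (range d).filter (fun k => (j:ℕ) ≤ k) := by
        ext x; simp [Finset.mem_Ico]; omega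
      rw [this, Finset.sum_filter]
      apply Finset.sum_congr rfl
      intro k _
      simp only [hχ, mul_ite, mul_one, mul_zero]
    rw [h1, he, telescope b (j:ℕ) d (le_of_lt j.isLt)]
    have hbd : b d = 0 := by simp [hb]
    have hbj : b (j:ℕ) = β j := by simp [hb, j.isLt]
    rw [hbd, hbj, sub_zero]
  -- expand both sides as quadruple sums
  have expandL : ∑ i, ∑ j, α i * β j * p i j
      = ∑ k ∈ range d, ∑ l ∈ range d, c k * e l * (∑ i, ∑ j, χ i k * χ j l * p i j) := by
    have step : ∀ (i j : Fin d), α i * β j * p i j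
        = ∑ k ∈ range d, ∑ l ∈ range d, c k * e l * (χ i k * χ j l * p i j) := by
      intro i j
      rw [hαsum i, hβsum j, Finset.sum_mul, Finset.sum_mul]
      apply Finset.sum_congr rfl; intro k _
      rw [Finset.mul_sum, Finset.sum_mul]
      exact Finset.sum_congr rfl fun l _ => by ring
    calc ∑ i, ∑ j, α i * β j * p i j
        = ∑ i, ∑ j, ∑ k ∈ range d, ∑ l ∈ range d, c k * e l * (χ i k * χ j l * p i j) := by
          exact Finset.sum_congr rfl fun i _ => Finset.sum_congr rfl fun j _ => step i j
      _ = ∑ i, ∑ k ∈ range d, ∑ j, ∑ l ∈ range d, c k * e l * (χ i k * χ j l * p i j) :=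
          Finset.sum_congr rfl fun i _ => Finset.sum_comm
      _ = ∑ k ∈ range d, ∑ i, ∑ j, ∑ l ∈ range d, c k * e l * (χ i k * χ j l * p i j) :=
          Finset.sum_comm
      _ = ∑ k ∈ range d, ∑ i, ∑ l ∈ range d, ∑ j, c k * e l * (χ i k * χ j l * p i j) :=
          Finset.sum_congr rfl fun k _ => Finset.sum_congr rfl fun i _ => Finset.sum_comm
      _ = ∑ k ∈ range d, ∑ l ∈ range d, ∑ i, ∑ j, c k * e l * (χ i k * χ j l * p i j) :=
          Finset.sum_congr rfl fun k _ => Finset.sum_comm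
      _ = ∑ k ∈ range d, ∑ l ∈ range d, c k * e l * (∑ i, ∑ j, χ i k * χ j l * p i j) := by
          apply Finset.sum_congr rfl; intro k _
          apply Finset.sum_congr rfl; intro l _
          rw [Finset.mul_sum]
          apply Finset.sum_congr rfl; intro i _
          rw [Finset.mul_sum]
  have expandR : ∑ i, α i * β i
      = ∑ k ∈ range d, ∑ l ∈ range d, c k * e l * (∑ i, χ i k * χ i l) := by
    have step : ∀ (i : Fin d), α i * β i
        = ∑ k ∈ range d, ∑ l ∈ range d, c k * e l * (χ i k * χ i l) := by
      intro i
      rw [hαsum i, hβsum i, Finset.sum_mul]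
      apply Finset.sum_congr rfl; intro k _
      rw [Finset.mul_sum]
      apply Finset.sum_congr rfl; intro l _
      ring
    calc ∑ i, α i * β i
        = ∑ i, ∑ k ∈ range d, ∑ l ∈ range d, c k * e l * (χ i k * χ i l) := by
          exact Finset.sum_congr rfl fun i _ => step i
      _ = ∑ k ∈ range d, ∑ i, ∑ l ∈ range d, c k * e l * (χ i k * χ i l) := Finset.sum_comm
      _ = ∑ k ∈ range d, ∑ l ∈ range d, ∑ i, c k * e l * (χ i k * χ i l) := by
          exact Finset.sum_congr rfl fun k _ => Finset.sum_comm
      _ = ∑ k ∈ range d, ∑ l ∈ range d, c k * e l * (∑ i, χ i k * χ i l) := by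
          apply Finset.sum_congr rfl; intro k _
          apply Finset.sum_congr rfl; intro l _
          rw [Finset.mul_sum]
  rw [expandL, expandR]
  apply Finset.sum_le_sum; intro k _
  apply Finset.sum_le_sum; intro l _
  apply mul_le_mul_of_nonneg_left _ (mul_nonneg (hc0 k) (he0 l))
  -- key bound: T k l ≤ N k l
  rcases le_total k l with hkl | hkl
  · calc ∑ i, ∑ j, χ i k * χ j l * p i j
        ≤ ∑ i : Fin d, χ i k := by
          apply Finset.sum_le_sum; intro i _
          have hstep : ∑ j, χ i k * χ j l * p i j ≤ χ i k * ∑ j, p i j := by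
            rw [Finset.mul_sum]
            apply Finset.sum_le_sum; intro j _
            have h1 : χ j l * p i j ≤ p i j := mul_le_of_le_one_left (hp i j) (hχ1 j l)
            calc χ i k * χ j l * p i j = χ i k * (χ j l * p i j) := by ring
              _ ≤ χ i k * p i j := mul_le_mul_of_nonneg_left h1 (hχ0 i k)
          calc ∑ j, χ i k * χ j l * p i j ≤ χ i k * ∑ j, p i j := hstep
            _ ≤ χ i k * 1 := mul_le_mul_of_nonneg_left (hrow i) (hχ0 i k)
            _ = χ i k := mul_one _
      _ = ∑ i, χ i k * χ i l := by
          apply Finset.sum_congr rfl; intro i _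
          by_cases h : (i:ℕ) ≤ k
          · simp [hχ, h, le_trans h hkl]
          · simp [hχ, h]
  · calc ∑ i, ∑ j, χ i k * χ j l * p i j
        = ∑ j, ∑ i, χ i k * χ j l * p i j := Finset.sum_comm
      _ ≤ ∑ j : Fin d, χ j l := by
          apply Finset.sum_le_sum; intro j _
          have hstep : ∑ i, χ i k * χ j l * p i j ≤ χ j l * ∑ i, p i j := by
            rw [Finset.mul_sum]
            apply Finset.sum_le_sum; intro i _
            have h1 : χ i k * p i j ≤ p i j := mul_le_of_le_one_left (hp i j) (hχ1 i k)
            calc χ i k * χ j l * p i j = χ j l * (χ i k * p i j) := by ring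
              _ ≤ χ j l * p i j := mul_le_mul_of_nonneg_left h1 (hχ0 j l)
          calc ∑ i, χ i k * χ j l * p i j ≤ χ j l * ∑ i, p i j := hstep
            _ ≤ χ j l * 1 := mul_le_mul_of_nonneg_left (hcol j) (hχ0 j l)
            _ = χ j l := mul_one _
      _ = ∑ i, χ i k * χ i l := by
          apply Finset.sum_congr rfl; intro i _
          by_cases h : (i:ℕ) ≤ l
          · simp [hχ, h, le_trans h hkl]
          · simp [hχ, h]

lemma diag_conj_le_one {d : ℕ} (V P : Matrix (Fin d) (Fin d) ℝ) (hV : Vᵀ * V = 1)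
    (hPsym : Pᵀ = P) (hPidem : P * P = P) (i : Fin d) : (Vᵀ * P * V) i i ≤ 1 := by
  set Q := (1 : Matrix (Fin d) (Fin d) ℝ) - P with hQ
  set N := Q * V with hN
  have hQsym : Qᵀ = Q := by rw [hQ, Matrix.transpose_sub, Matrix.transpose_one, hPsym]
  have hQidem : Q * Q = Q := by
    simp only [hQ, Matrix.sub_mul, Matrix.mul_sub, Matrix.mul_one, Matrix.one_mul, hPidem]
    abel
  have hNtN : Nᵀ * N = 1 - Vᵀ * P * V := by
    have h1 : Nᵀ * N = Vᵀ * (Q * Q) * V := by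
      rw [hN, Matrix.transpose_mul, hQsym]; noncomm_ring
    rw [h1, hQidem, hQ, Matrix.mul_sub, Matrix.mul_one, Matrix.sub_mul, hV]
  have h0 : 0 ≤ (Nᵀ * N) i i := by
    rw [Matrix.mul_apply]
    exact Finset.sum_nonneg fun k _ => by
      rw [Matrix.transpose_apply]; exact mul_self_nonneg _
  rw [hNtN, Matrix.sub_apply, Matrix.one_apply_eq] at h0
  linarith


/-- **Von Neumann's trace inequality** (real square case).  If `σA` and `σB` list the
singular values of `A` and `B` in nonincreasing order, then
`tr(A B) ≤ Σ_i σA i * σB i`. -/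
theorem vonNeumann_trace_inequality
    {d : ℕ} (A B : Matrix (Fin d) (Fin d) ℝ)
    (σA σB : Fin d → ℝ)
    (hσA : Antitone σA) (hσB : Antitone σB)
    (eA : Fin d ≃ Fin d) (heA : ∀ i, σA i = singularValues A (eA i))
    (eB : Fin d ≃ Fin d) (heB : ∀ i, σB i = singularValues B (eB i)) :
    (A * B).trace ≤ ∑ i, σA i * σB i := by

  classical
  obtain ⟨UA, VA, fA, hVA1, hVA2, hUA, hfA, hPAsym, hPAidem, hAdec⟩ := svd_decomp A
  obtain ⟨UB, VB, fB, hVB1, hVB2, hUB, hfB, hPBsym, hPBidem, hBdec⟩ := svd_decomp B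
  set sA := singularValues A with hsA
  set sB := singularValues B with hsB
  set M1 := VAᵀ * UB with hM1
  set M2 := VBᵀ * UA with hM2
  have hσA0 : ∀ i, 0 ≤ σA i := fun i => by rw [heA i]; exact Real.sqrt_nonneg _
  have hσB0 : ∀ i, 0 ≤ σB i := fun i => by rw [heB i]; exact Real.sqrt_nonneg _
  -- trace formula
  have htr : (A * B).trace = ∑ i, ∑ j, sA i * sB j * (M1 i j * M2 j i) := by
    have h1 : A * B = UA * (Matrix.diagonal sA * M1 * Matrix.diagonal sB * VBᵀ) := by
      rw [hAdec, hBdec, hM1]; noncomm_ring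
    rw [h1, Matrix.trace_mul_comm]
    have h2 : Matrix.diagonal sA * M1 * Matrix.diagonal sB * VBᵀ * UA
        = Matrix.diagonal sA * M1 * Matrix.diagonal sB * M2 := by rw [hM2]; noncomm_ring
    rw [h2, Matrix.trace]
    apply Finset.sum_congr rfl; intro i _
    rw [Matrix.diag_apply, Matrix.mul_apply]
    apply Finset.sum_congr rfl; intro j _
    rw [Matrix.mul_diagonal, Matrix.diagonal_mul]
    ring
  -- reindex
  have hre : ∑ i, ∑ j, sA i * sB j * (M1 i j * M2 j i)
      = ∑ i, ∑ j, σA i * σB j * (M1 (eA i) (eB j) * M2 (eB j) (eA i)) := by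
    rw [← Equiv.sum_comp eA (fun i => ∑ j, sA i * sB j * (M1 i j * M2 j i))]
    apply Finset.sum_congr rfl; intro i _
    rw [← Equiv.sum_comp eB (fun j => sA (eA i) * sB j * (M1 (eA i) j * M2 j (eA i)))]
    apply Finset.sum_congr rfl; intro j _
    rw [heA, heB]
  -- the two substochastic matrices
  set p : Fin d → Fin d → ℝ := fun i j => M1 (eA i) (eB j) ^ 2 with hp
  set q : Fin d → Fin d → ℝ := fun i j => M2 (eB j) (eA i) ^ 2 with hq
  have hsq : ∀ (M : Matrix (Fin d) (Fin d) ℝ) (a : Fin d),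
      ∑ j, M a j ^ 2 = (M * Mᵀ) a a := by
    intro M a
    rw [Matrix.mul_apply]
    exact Finset.sum_congr rfl fun j _ => by rw [Matrix.transpose_apply, sq]
  have hsq' : ∀ (M : Matrix (Fin d) (Fin d) ℝ) (a : Fin d),
      ∑ i, M i a ^ 2 = (Mᵀ * M) a a := by
    intro M a
    rw [Matrix.mul_apply]
    exact Finset.sum_congr rfl fun j _ => by rw [Matrix.transpose_apply, sq]
  have hM1M1t : M1 * M1ᵀ = VAᵀ * (UB * UBᵀ) * VA := by
    rw [hM1, Matrix.transpose_mul, Matrix.transpose_transpose]; noncomm_ring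
  have hM1tM1 : M1ᵀ * M1 = Matrix.diagonal fB := by
    rw [hM1, Matrix.transpose_mul, Matrix.transpose_transpose, ← hUB]
    calc UBᵀ * VAᵀᵀ * (VAᵀ * UB) = UBᵀ * (VA * VAᵀ) * UB := by
          rw [Matrix.transpose_transpose]; noncomm_ring
      _ = UBᵀ * UB := by rw [hVA2, Matrix.mul_one]
  have hM2M2t : M2 * M2ᵀ = VBᵀ * (UA * UAᵀ) * VB := by
    rw [hM2, Matrix.transpose_mul, Matrix.transpose_transpose]; noncomm_ring
  have hM2tM2 : M2ᵀ * M2 = Matrix.diagonal fA := by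
    rw [hM2, Matrix.transpose_mul, Matrix.transpose_transpose, ← hUA]
    calc UAᵀ * VBᵀᵀ * (VBᵀ * UA) = UAᵀ * (VB * VBᵀ) * UA := by
          rw [Matrix.transpose_transpose]; noncomm_ring
      _ = UAᵀ * UA := by rw [hVB2, Matrix.mul_one]
  have hprow : ∀ i, ∑ j, p i j ≤ 1 := by
    intro i
    have : ∑ j, p i j = (M1 * M1ᵀ) (eA i) (eA i) := by
      rw [← hsq M1 (eA i)]
      exact Equiv.sum_comp eB (fun j => M1 (eA i) j ^ 2)
    rw [this, hM1M1t]
    exact diag_conj_le_one VA (UB * UBᵀ) hVA1 hPBsym hPBidem (eA i)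
  have hpcol : ∀ j, ∑ i, p i j ≤ 1 := by
    intro j
    have : ∑ i, p i j = (M1ᵀ * M1) (eB j) (eB j) := by
      rw [← hsq' M1 (eB j)]
      exact Equiv.sum_comp eA (fun i => M1 i (eB j) ^ 2)
    rw [this, hM1tM1, Matrix.diagonal_apply_eq]
    exact hfB _
  have hqrow : ∀ i, ∑ j, q i j ≤ 1 := by
    intro i
    have : ∑ j, q i j = (M2ᵀ * M2) (eA i) (eA i) := by
      rw [← hsq' M2 (eA i)]
      exact Equiv.sum_comp eB (fun j => M2 j (eA i) ^ 2)
    rw [this, hM2tM2, Matrix.diagonal_apply_eq]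
    exact hfA _
  have hqcol : ∀ j, ∑ i, q i j ≤ 1 := by
    intro j
    have : ∑ i, q i j = (M2 * M2ᵀ) (eB j) (eB j) := by
      rw [← hsq M2 (eB j)]
      exact Equiv.sum_comp eA (fun i => M2 (eB j) i ^ 2)
    rw [this, hM2M2t]
    exact diag_conj_le_one VB (UA * UAᵀ) hVB1 hPAsym hPAidem (eB j)
  have hp0 : ∀ i j, 0 ≤ p i j := fun i j => sq_nonneg _
  have hq0 : ∀ i j, 0 ≤ q i j := fun i j => sq_nonneg _
  have hkey1 := subStochastic_rearrange σA σB hσA hσB hσA0 hσB0 p hp0 hprow hpcol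
  have hkey2 := subStochastic_rearrange σA σB hσA hσB hσA0 hσB0 q hq0 hqrow hqcol
  rw [htr, hre]
  have hbound : ∑ i, ∑ j, σA i * σB j * (M1 (eA i) (eB j) * M2 (eB j) (eA i))
      ≤ ∑ i, ∑ j, (σA i * σB j * p i j + σA i * σB j * q i j) / 2 := by
    apply Finset.sum_le_sum; intro i _
    apply Finset.sum_le_sum; intro j _
    have h1 : M1 (eA i) (eB j) * M2 (eB j) (eA i) ≤ (p i j + q i j) / 2 := by
      simp only [hp, hq]
      nlinarith [sq_nonneg (M1 (eA i) (eB j) - M2 (eB j) (eA i))]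
    have h2 : 0 ≤ σA i * σB j := mul_nonneg (hσA0 i) (hσB0 j)
    calc σA i * σB j * (M1 (eA i) (eB j) * M2 (eB j) (eA i))
        ≤ σA i * σB j * ((p i j + q i j) / 2) := mul_le_mul_of_nonneg_left h1 h2
      _ = (σA i * σB j * p i j + σA i * σB j * q i j) / 2 := by ring
  refine le_trans hbound ?_
  have hsplit : ∑ i, ∑ j, (σA i * σB j * p i j + σA i * σB j * q i j) / 2
      = ((∑ i, ∑ j, σA i * σB j * p i j) + ∑ i, ∑ j, σA i * σB j * q i j) / 2 := by
    calc ∑ i, ∑ j, (σA i * σB j * p i j + σA i * σB j * q i j) / 2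
        = ∑ i, ((∑ j, σA i * σB j * p i j) + ∑ j, σA i * σB j * q i j) / 2 := by
          apply Finset.sum_congr rfl; intro i _
          rw [← Finset.sum_div, Finset.sum_add_distrib]
      _ = ((∑ i, ∑ j, σA i * σB j * p i j) + ∑ i, ∑ j, σA i * σB j * q i j) / 2 := by
          rw [← Finset.sum_div, Finset.sum_add_distrib]
  rw [hsplit]
  linarith
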